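/- arXiv:2010.12353 — 4 statements merged into one kernel-verified Lean document; each statement's English description precedes it below -/
import Mathlib

section
/- Let Y, Y_i, Y_j be {0,1}-valued random variables on a probability space (Ω, ℙ). Then ℙ(Y_i ≠ Y) − ℙ(Y_j ≠ Y) = ℙ(Y_i ≠ Y_j) − 2·ℙ(Y_i = Y and Y_j ≠ Y). -/
open MeasureTheory

/-- Lemma 1: For {0,1}-valued random variables `Y, Yi, Yj` on a probability space,
`ℙ(Yi ≠ Y) − ℙ(Yj ≠ Y) = ℙ(Yi ≠ Yj) − 2 ℙ(Yi = Y ∧ Yj ≠ Y)`. -/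
theorem stmt_0 {Ω : Type*} [MeasurableSpace Ω] (ℙ : Measure Ω) [IsProbabilityMeasure ℙ]
    (Y Yi Yj : Ω → Bool) (hY : Measurable Y) (hYi : Measurable Yi) (hYj : Measurable Yj) :
    (ℙ {ω | Yi ω ≠ Y ω}).toReal - (ℙ {ω | Yj ω ≠ Y ω}).toReal
      = (ℙ {ω | Yi ω ≠ Yj ω}).toReal
        - 2 * (ℙ {ω | Yi ω = Y ω ∧ Yj ω ≠ Y ω}).toReal := by
  set A : Set Ω := {ω | Yi ω ≠ Y ω} with hA
  set B : Set Ω := {ω | Yj ω ≠ Y ω} with hB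
  have hAm : MeasurableSet A := (measurableSet_eq_fun hYi hY).compl
  have hBm : MeasurableSet B := (measurableSet_eq_fun hYj hY).compl
  -- set identities
  have h1 : A = (A ∩ Bᶜ) ∪ (A ∩ B) := by
    ext ω; simp [hA, hB]; tauto
  have h2 : B = (Aᶜ ∩ B) ∪ (A ∩ B) := by
    ext ω; simp [hA, hB]; tauto
  have h3 : {ω | Yi ω ≠ Yj ω} = (A ∩ Bᶜ) ∪ (Aᶜ ∩ B) := by
    ext ω
    simp only [Set.mem_setOf_eq, Set.mem_union, Set.mem_inter_iff, Set.mem_compl_iff, hA, hB,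
      Set.mem_setOf_eq]
    cases h : Yi ω <;> cases h' : Yj ω <;> cases h'' : Y ω <;> simp
  have h4 : {ω | Yi ω = Y ω ∧ Yj ω ≠ Y ω} = Aᶜ ∩ B := by
    ext ω; simp [hA, hB]
  have fin : ∀ s : Set Ω, ℙ s ≠ ⊤ := fun s => measure_ne_top ℙ s
  have d1 : Disjoint (A ∩ Bᶜ) (A ∩ B) := by
    apply Set.disjoint_left.2; rintro ω ⟨_, h⟩ ⟨_, h'⟩; exact h h'
  have d2 : Disjoint (Aᶜ ∩ B) (A ∩ B) := by
    apply Set.disjoint_left.2; rintro ω ⟨h, _⟩ ⟨h', _⟩; exact h h'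
  have d3 : Disjoint (A ∩ Bᶜ) (Aᶜ ∩ B) := by
    apply Set.disjoint_left.2; rintro ω ⟨h, _⟩ ⟨h', _⟩; exact h' h
  have e1 : (ℙ A).toReal = (ℙ (A ∩ Bᶜ)).toReal + (ℙ (A ∩ B)).toReal := by
    conv_lhs => rw [h1]
    rw [measure_union d1 (hAm.inter hBm), ENNReal.toReal_add (fin _) (fin _)]
  have e2 : (ℙ B).toReal = (ℙ (Aᶜ ∩ B)).toReal + (ℙ (A ∩ B)).toReal := by
    conv_lhs => rw [h2]
    rw [measure_union d2 (hAm.inter hBm), ENNReal.toReal_add (fin _) (fin _)]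
  have e3 : (ℙ {ω | Yi ω ≠ Yj ω}).toReal
      = (ℙ (A ∩ Bᶜ)).toReal + (ℙ (Aᶜ ∩ B)).toReal := by
    rw [h3, measure_union d3 (hAm.compl.inter hBm), ENNReal.toReal_add (fin _) (fin _)]
  rw [e1, e2, e3, h4]
  ring
end

section
/- Let K ≥ 1 and let Y, Y_1, …, Y_K be {0,1}-valued random variables on a probability space (Ω, ℙ). Set γ(i) := ℙ(Y_i ≠ Y) and, for i < j, p(i,j) := ℙ(Y_i ≠ Y_j). Let C : {1,…,K} → ℝ and let i⋆ be the largest element of argmin_{i∈{1,…,K}} (γ(i) + C(i)). Assume the weak-dominance property: for every j > i⋆, C(j) − C(i⋆) > p(i⋆, j). Define B := { i ∈ {1,…,K} : for all j > i, C(j) − C(i) > p(i,j) } ∪ {K}. Then min B = i⋆. -/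
open MeasureTheory

/-- Lemma 2: under the weak-dominance property, the least element of the set
`B = {i : ∀ j > i, C(j) − C(i) > p(i,j)} ∪ {K}` is the optimal arm `i⋆`,
where `i⋆` is the largest element of `argmin_i (γ(i) + C(i))`. -/
theorem stmt_5 {Ω : Type*} [MeasurableSpace Ω] (ℙ : Measure Ω) [IsProbabilityMeasure ℙ]
    (K : ℕ) (hK : 1 ≤ K)
    (Y : Ω → Bool) (Ys : Fin K → Ω → Bool)
    (hY : Measurable Y) (hYs : ∀ i, Measurable (Ys i))
    (γ : Fin K → ℝ) (hγ : ∀ i, γ i = (ℙ {ω | Ys i ω ≠ Y ω}).toReal)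
    (p : Fin K → Fin K → ℝ)
    (hp : ∀ i j, i < j → p i j = (ℙ {ω | Ys i ω ≠ Ys j ω}).toReal)
    (C : Fin K → ℝ) (istar : Fin K)
    (hmin : ∀ i, γ istar + C istar ≤ γ i + C i)
    (hlargest : ∀ i, (∀ k, γ i + C i ≤ γ k + C k) → i ≤ istar)
    (hWD : ∀ j, istar < j → C j - C istar > p istar j) :
    IsLeast ({i | ∀ j, i < j → C j - C i > p i j} ∪ {(⟨K - 1, by omega⟩ : Fin K)}) istar := by
  constructor
  · left
    exact fun j hj => hWD j hj
  · rintro i (hi | hi)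
    · by_contra hlt
      push_neg at hlt
      have hCi : C istar - C i > p i istar := hi istar hlt
      -- triangle inequality: γ istar ≤ γ i + p i istar
      have hsub : {ω | Ys i ω ≠ Y ω} ⊆ {ω | Ys i ω ≠ Ys istar ω} ∪ {ω | Ys istar ω ≠ Y ω} := by
        intro ω hω
        by_cases h : Ys i ω = Ys istar ω
        · right; simp only [Set.mem_setOf_eq] at *; rw [← h]; exact hω
        · left; exact h
      have hfin1 : ℙ {ω | Ys i ω ≠ Ys istar ω} ≠ ⊤ := measure_ne_top _ _
      have hfin2 : ℙ {ω | Ys istar ω ≠ Y ω} ≠ ⊤ := measure_ne_top _ _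
      have htri : γ i ≤ p i istar + γ istar := by
        rw [hγ, hγ, hp i istar hlt]
        calc (ℙ {ω | Ys i ω ≠ Y ω}).toReal
            ≤ (ℙ ({ω | Ys i ω ≠ Ys istar ω} ∪ {ω | Ys istar ω ≠ Y ω})).toReal := by
              apply ENNReal.toReal_mono (measure_ne_top _ _)
              exact measure_mono hsub
          _ ≤ (ℙ {ω | Ys i ω ≠ Ys istar ω}).toReal + (ℙ {ω | Ys istar ω ≠ Y ω}).toReal := by
              rw [← ENNReal.toReal_add hfin1 hfin2]
              exact ENNReal.toReal_mono (by simp [hfin1, hfin2]) (measure_union_le _ _)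
      have := hmin i
      linarith
    · simp only [Set.mem_singleton_iff] at hi
      subst hi
      have h := istar.isLt
      exact Fin.le_def.mpr (by show istar.val ≤ K - 1; omega)
end

section
/- Let V ∈ ℝ^{d×d} be a symmetric positive definite matrix with smallest eigenvalue λ_min(V), let θ⋆, θ̂, φ ∈ ℝ^d with ‖φ‖₂ ≤ 1 and ‖θ⋆ − θ̂‖_V ≤ α for some α ≥ 0, let μ : ℝ → ℝ be Lipschitz with constant k_μ ≥ 0, and let ξ > 0. If μ(φᵀθ⋆ + α·‖φ‖_{V⁻¹}) − μ(φᵀθ̂) > ξ, then 2·k_μ·α > ξ·√(λ_min(V)). -/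
open Matrix

private lemma dot_sym {d : ℕ} {V : Matrix (Fin d) (Fin d) ℝ} (hV : V.PosDef)
    (a b : Fin d → ℝ) : a ⬝ᵥ V *ᵥ b = b ⬝ᵥ V *ᵥ a := by
  have hVt : Vᵀ = V := by simpa using hV.1.eq
  rw [dotProduct_mulVec, ← mulVec_transpose, hVt, dotProduct_comm]

/-- Cauchy–Schwarz for the quadratic form of a positive definite matrix. -/
private lemma cs_quad {d : ℕ} (V : Matrix (Fin d) (Fin d) ℝ) (hV : V.PosDef)
    (x y : Fin d → ℝ) :
    (x ⬝ᵥ V *ᵥ y)^2 ≤ (x ⬝ᵥ V *ᵥ x) * (y ⬝ᵥ V *ᵥ y) := by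
  have key : ∀ t : ℝ, 0 ≤ (y ⬝ᵥ V *ᵥ y) * (t*t) + (2 * (x ⬝ᵥ V *ᵥ y)) * t + (x ⬝ᵥ V *ᵥ x) := by
    intro t
    have h0 := hV.posSemidef.dotProduct_mulVec_nonneg (x + t • y)
    simp only [star_trivial, RCLike.re_to_real] at h0
    have hx : (x + t • y) ⬝ᵥ V *ᵥ (x + t • y)
        = (y ⬝ᵥ V *ᵥ y) * (t*t) + (2 * (x ⬝ᵥ V *ᵥ y)) * t + (x ⬝ᵥ V *ᵥ x) := by
      simp only [mulVec_add, mulVec_smul, add_dotProduct, dotProduct_add, smul_dotProduct,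
        dotProduct_smul, smul_eq_mul, dot_sym hV y x]
      ring
    linarith [hx ▸ h0]
  have hd := discrim_le_zero key
  rw [discrim] at hd
  nlinarith [hd]

private lemma iInf_eig_pos {d : ℕ} [NeZero d] {V : Matrix (Fin d) (Fin d) ℝ}
    (hV : V.PosDef) : 0 < ⨅ i, hV.1.eigenvalues i := by
  obtain ⟨i, hi⟩ := exists_eq_ciInf_of_finite (f := hV.1.eigenvalues)
  rw [← hi]
  exact hV.eigenvalues_pos i

/-- The quadratic form of `V⁻¹` is bounded by `λ_min(V)⁻¹` times the Euclidean one. -/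
private lemma inv_quad_le {d : ℕ} [NeZero d] (V : Matrix (Fin d) (Fin d) ℝ) (hV : V.PosDef)
    (x : Fin d → ℝ) :
    x ⬝ᵥ V⁻¹ *ᵥ x ≤ (⨅ i, hV.1.eigenvalues i)⁻¹ * (x ⬝ᵥ x) := by
  set c := ⨅ i, hV.1.eigenvalues i with hc
  set U : Matrix (Fin d) (Fin d) ℝ := (hV.1.eigenvectorUnitary : Matrix (Fin d) (Fin d) ℝ) with hU
  set e : Fin d → ℝ := hV.1.eigenvalues with he
  have hcle : ∀ i, c ≤ e i := fun i => ciInf_le (Finite.bddBelow_range _) i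
  have hepos : ∀ i, 0 < e i := fun i => hV.eigenvalues_pos i
  have hcpos : 0 < c := iInf_eig_pos hV
  have hUU : U * star U = 1 := (Matrix.mem_unitaryGroup_iff).mp hV.1.eigenvectorUnitary.2
  have hUU' : star U * U = 1 := (Matrix.mem_unitaryGroup_iff').mp hV.1.eigenvectorUnitary.2
  have hspec : V = U * diagonal e * star U := by
    have := hV.1.spectral_theorem
    have hDval : (RCLike.ofReal ∘ hV.1.eigenvalues : Fin d → ℝ) = e := by ext i; simp [he]
    rw [hDval] at this; exact this
  have hinv : V⁻¹ = U * diagonal (fun i => (e i)⁻¹) * star U := by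
    apply Matrix.inv_eq_right_inv
    have h2 := congrArg (fun M => M * (U * diagonal (fun i => (e i)⁻¹) * star U)) hspec
    rw [h2]
    simp only [Matrix.mul_assoc]
    rw [← Matrix.mul_assoc (star U) U, hUU', Matrix.one_mul,
      ← Matrix.mul_assoc (diagonal e), diagonal_mul_diagonal]
    have h3 : (fun i => e i * (e i)⁻¹) = fun _ : Fin d => (1:ℝ) := by
      ext i; exact mul_inv_cancel₀ (ne_of_gt (hepos i))
    rw [h3, diagonal_one, Matrix.one_mul]
    exact hUU
  have hM : (c⁻¹ • (1 : Matrix (Fin d) (Fin d) ℝ) - V⁻¹).PosSemidef := by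
    have heq : c⁻¹ • (1 : Matrix (Fin d) (Fin d) ℝ) - V⁻¹
        = U * diagonal (fun i => c⁻¹ - (e i)⁻¹) * star U := by
      have h1 : (diagonal (fun _ : Fin d => c⁻¹) : Matrix (Fin d) (Fin d) ℝ) = c⁻¹ • 1 := by
        ext i j
        by_cases hij : i = j <;> simp [diagonal_apply, hij, one_apply]
      rw [← diagonal_sub, Matrix.mul_sub, Matrix.sub_mul, h1, ← hinv]
      congr 1
      rw [Matrix.mul_smul, Matrix.smul_mul, Matrix.mul_one, hUU]
    rw [heq, Matrix.star_eq_conjTranspose]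
    refine PosSemidef.mul_mul_conjTranspose_same ?_ U
    refine posSemidef_diagonal_iff.mpr fun i => ?_
    have h4 : (e i)⁻¹ ≤ c⁻¹ := inv_anti₀ hcpos (hcle i)
    linarith
  have h0 := hM.dotProduct_mulVec_nonneg x
  simp only [star_trivial, RCLike.re_to_real] at h0
  rw [sub_mulVec, smul_mulVec, one_mulVec, dotProduct_sub, dotProduct_smul,
    smul_eq_mul] at h0
  linarith

/-- Deterministic core of Lemma 6: if the optimistic estimate overshoots the plug-in
estimate by more than `ξ`, then `2 k_μ α > ξ √(λ_min(V))`. -/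
theorem stmt_7 {d : ℕ} (V : Matrix (Fin d) (Fin d) ℝ) (hV : V.PosDef)
    (θstar θhat φ : Fin d → ℝ) (hφ : Real.sqrt (φ ⬝ᵥ φ) ≤ 1)
    (α : ℝ) (hα : 0 ≤ α)
    (hconf : Real.sqrt ((θstar - θhat) ⬝ᵥ V *ᵥ (θstar - θhat)) ≤ α)
    (μ : ℝ → ℝ) (kμ : ℝ) (hkμ : 0 ≤ kμ)
    (hLip : ∀ a b, |μ a - μ b| ≤ kμ * |a - b|)
    (ξ : ℝ) (hξ : 0 < ξ)
    (h : μ (φ ⬝ᵥ θstar + α * Real.sqrt (φ ⬝ᵥ V⁻¹ *ᵥ φ)) - μ (φ ⬝ᵥ θhat) > ξ) :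
    2 * kμ * α > ξ * Real.sqrt (⨅ i, hV.1.eigenvalues i) := by
  rcases Nat.eq_zero_or_pos d with hd | hd
  · subst hd
    simp only [dotProduct, Finset.univ_eq_empty, Finset.sum_empty, Real.sqrt_zero,
      mul_zero, add_zero] at h
    linarith
  haveI : NeZero d := ⟨hd.ne'⟩
  set Δ : Fin d → ℝ := θstar - θhat with hΔdef
  set w : ℝ := Real.sqrt (φ ⬝ᵥ V⁻¹ *ᵥ φ) with hw
  set c : ℝ := ⨅ i, hV.1.eigenvalues i with hc
  have hcpos : 0 < c := iInf_eig_pos hV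
  have hdet : IsUnit V.det := isUnit_iff_ne_zero.mpr (ne_of_gt hV.det_pos)
  -- basic nonnegativity facts
  have hq0 : 0 ≤ φ ⬝ᵥ V⁻¹ *ᵥ φ := by
    have := hV.inv.posSemidef.dotProduct_mulVec_nonneg φ
    simpa using this
  have hwsq : w^2 = φ ⬝ᵥ V⁻¹ *ᵥ φ := Real.sq_sqrt hq0
  have hw0 : 0 ≤ w := Real.sqrt_nonneg _
  have hΔq0 : 0 ≤ Δ ⬝ᵥ V *ᵥ Δ := by
    have := hV.posSemidef.dotProduct_mulVec_nonneg Δ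
    simpa using this
  have hΔV : Δ ⬝ᵥ V *ᵥ Δ ≤ α^2 := by
    have h1 : Real.sqrt (Δ ⬝ᵥ V *ᵥ Δ) ≤ α := hconf
    nlinarith [Real.sq_sqrt hΔq0, Real.sqrt_nonneg (Δ ⬝ᵥ V *ᵥ Δ)]
  have hφφ0 : 0 ≤ φ ⬝ᵥ φ := by
    have : (0:ℝ) ≤ ∑ i, φ i * φ i := Finset.sum_nonneg fun i _ => mul_self_nonneg _
    simpa [dotProduct] using this
  have hφφ1 : φ ⬝ᵥ φ ≤ 1 := by
    nlinarith [Real.sq_sqrt hφφ0, Real.sqrt_nonneg (φ ⬝ᵥ φ)]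
  -- Cauchy–Schwarz : |φ ⬝ᵥ Δ| ≤ w * α
  have hVVinv : V *ᵥ (V⁻¹ *ᵥ φ) = φ := by
    rw [mulVec_mulVec, Matrix.mul_nonsing_inv V hdet, one_mulVec]
  have hCS : (φ ⬝ᵥ Δ)^2 ≤ (φ ⬝ᵥ V⁻¹ *ᵥ φ) * (Δ ⬝ᵥ V *ᵥ Δ) := by
    have h1 := cs_quad V hV (V⁻¹ *ᵥ φ) Δ
    have h2 : (V⁻¹ *ᵥ φ) ⬝ᵥ V *ᵥ Δ = φ ⬝ᵥ Δ := by
      have hVt : Vᵀ = V := by simpa using hV.1.eq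
      rw [dotProduct_mulVec, ← mulVec_transpose, hVt, hVVinv]
    have h3 : (V⁻¹ *ᵥ φ) ⬝ᵥ V *ᵥ (V⁻¹ *ᵥ φ) = φ ⬝ᵥ V⁻¹ *ᵥ φ := by
      rw [hVVinv, dotProduct_comm]
    rw [h2, h3] at h1
    exact h1
  have habs : |φ ⬝ᵥ Δ| ≤ w * α := by
    have hwa : 0 ≤ w * α := mul_nonneg hw0 hα
    have h4 : (φ ⬝ᵥ Δ)^2 ≤ (w * α)^2 := by
      have : (φ ⬝ᵥ V⁻¹ *ᵥ φ) * (Δ ⬝ᵥ V *ᵥ Δ) ≤ w^2 * α^2 := by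
        rw [hwsq]
        exact mul_le_mul_of_nonneg_left hΔV hq0
      calc (φ ⬝ᵥ Δ)^2 ≤ (φ ⬝ᵥ V⁻¹ *ᵥ φ) * (Δ ⬝ᵥ V *ᵥ Δ) := hCS
        _ ≤ w^2 * α^2 := this
        _ = (w * α)^2 := by ring
    nlinarith [abs_nonneg (φ ⬝ᵥ Δ), sq_abs (φ ⬝ᵥ Δ)]
  -- Lipschitz step : ξ < 2 kμ α w
  have hdot : φ ⬝ᵥ Δ = φ ⬝ᵥ θstar - φ ⬝ᵥ θhat := by
    rw [hΔdef, dotProduct_sub]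
  have hlip := hLip (φ ⬝ᵥ θstar + α * w) (φ ⬝ᵥ θhat)
  have hsd : |φ ⬝ᵥ θstar + α * w - φ ⬝ᵥ θhat| ≤ |φ ⬝ᵥ Δ| + α * w := by
    have : φ ⬝ᵥ θstar + α * w - φ ⬝ᵥ θhat = (φ ⬝ᵥ Δ) + α * w := by rw [hdot]; ring
    rw [this]
    calc |(φ ⬝ᵥ Δ) + α * w| ≤ |φ ⬝ᵥ Δ| + |α * w| := abs_add_le _ _
      _ = |φ ⬝ᵥ Δ| + α * w := by rw [abs_of_nonneg (mul_nonneg hα hw0)]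
  have hξw : ξ < 2 * kμ * α * w := by
    have h5 : ξ < kμ * |φ ⬝ᵥ θstar + α * w - φ ⬝ᵥ θhat| := by
      calc ξ < μ (φ ⬝ᵥ θstar + α * w) - μ (φ ⬝ᵥ θhat) := h
        _ ≤ |μ (φ ⬝ᵥ θstar + α * w) - μ (φ ⬝ᵥ θhat)| := le_abs_self _
        _ ≤ kμ * |φ ⬝ᵥ θstar + α * w - φ ⬝ᵥ θhat| := hlip
    have h6 : kμ * |φ ⬝ᵥ θstar + α * w - φ ⬝ᵥ θhat| ≤ kμ * (2 * α * w) := by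
      apply mul_le_mul_of_nonneg_left _ hkμ
      calc |φ ⬝ᵥ θstar + α * w - φ ⬝ᵥ θhat| ≤ |φ ⬝ᵥ Δ| + α * w := hsd
        _ ≤ w * α + α * w := by linarith [habs]
        _ = 2 * α * w := by ring
    calc ξ < kμ * |φ ⬝ᵥ θstar + α * w - φ ⬝ᵥ θhat| := h5
      _ ≤ kμ * (2 * α * w) := h6
      _ = 2 * kμ * α * w := by ring
  -- eigenvalue step : w * √c ≤ 1
  have hwc : w * Real.sqrt c ≤ 1 := by
    have h7 : w^2 * c ≤ 1 := by
      have := inv_quad_le V hV φ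
      rw [← hwsq, ← hc] at this
      have h8 : w^2 * c ≤ c⁻¹ * (φ ⬝ᵥ φ) * c :=
        mul_le_mul_of_nonneg_right this (le_of_lt hcpos)
      have h9 : c⁻¹ * (φ ⬝ᵥ φ) * c = φ ⬝ᵥ φ := by
        field_simp
      linarith [h8, h9 ▸ h8, hφφ1]
    have h10 : (w * Real.sqrt c)^2 ≤ 1 := by
      have := Real.sq_sqrt (le_of_lt hcpos)
      nlinarith [this]
    nlinarith [mul_nonneg hw0 (Real.sqrt_nonneg c)]
  have hsc : 0 < Real.sqrt c := Real.sqrt_pos.mpr hcpos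
  -- conclude
  have h11 : ξ * Real.sqrt c < 2 * kμ * α * w * Real.sqrt c :=
    mul_lt_mul_of_pos_right hξw hsc
  have h12 : 0 < 2 * kμ * α := by
    by_contra h'
    push_neg at h'
    have h' := mul_le_mul_of_nonneg_right h' hw0
    rw [zero_mul] at h'
    linarith
  have h13 : 2 * kμ * α * w * Real.sqrt c ≤ 2 * kμ * α := by
    have : 2 * kμ * α * (w * Real.sqrt c) ≤ 2 * kμ * α * 1 :=
      mul_le_mul_of_nonneg_left hwc (le_of_lt h12)
    linarith [this, mul_one (2 * kμ * α)]
  linarith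
end

section
/- Let K ≥ 1 and let Y, Y_1, …, Y_K be {0,1}-valued random variables on a probability space (Ω, ℙ). Set γ(i) := ℙ(Y_i ≠ Y) and p(i,j) := ℙ(Y_i ≠ Y_j). Let C : {1,…,K} → ℝ and let i⋆ be the largest element of argmin_{i∈{1,…,K}} (γ(i) + C(i)). Then the following two conditions are equivalent: (a) for every j < i⋆, C(i⋆) − C(j) ∉ (γ(j) − γ(i⋆), p(j, i⋆)], and for every j > i⋆, C(j) − C(i⋆) ∉ (γ(i⋆) − γ(j), p(i⋆, j)]; (b) for every j > i⋆, C(j) − C(i⋆) > p(i⋆, j). -/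
open MeasureTheory

/-- Key step in Theorem 1: for the optimal arm `i⋆` (largest minimizer of `γ(i) + C(i)`),
the interval-avoidance conditions (a) hold for all arms iff the weak-dominance
property (b) holds. -/
theorem stmt_13 {Ω : Type*} [MeasurableSpace Ω] (ℙ : Measure Ω) [IsProbabilityMeasure ℙ]
    (K : ℕ) (hK : 1 ≤ K)
    (Y : Ω → Bool) (Ys : Fin K → Ω → Bool)
    (hY : Measurable Y) (hYs : ∀ i, Measurable (Ys i))
    (γ : Fin K → ℝ) (hγ : ∀ i, γ i = (ℙ {ω | Ys i ω ≠ Y ω}).toReal)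
    (p : Fin K → Fin K → ℝ)
    (hp : ∀ i j, p i j = (ℙ {ω | Ys i ω ≠ Ys j ω}).toReal)
    (C : Fin K → ℝ) (istar : Fin K)
    (hmin : ∀ i, γ istar + C istar ≤ γ i + C i)
    (hlargest : ∀ i, (∀ k, γ i + C i ≤ γ k + C k) → i ≤ istar) :
    ((∀ j, j < istar → C istar - C j ∉ Set.Ioc (γ j - γ istar) (p j istar)) ∧
     (∀ j, istar < j → C j - C istar ∉ Set.Ioc (γ istar - γ j) (p istar j)))
    ↔ (∀ j, istar < j → C j - C istar > p istar j) := by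
  constructor
  · rintro ⟨_, h2⟩ j hj
    have hle := hmin j
    have hne : γ istar + C istar ≠ γ j + C j := by
      intro heq
      have hj' := hlargest j (fun k => heq ▸ hmin k)
      exact absurd hj (not_lt.mpr hj')
    have h1 : γ istar - γ j < C j - C istar := by
      have : γ istar + C istar < γ j + C j := lt_of_le_of_ne hle hne
      linarith
    have hnm := h2 j hj
    simp only [Set.mem_Ioc, not_and, not_le] at hnm
    exact hnm h1
  · intro hb
    refine ⟨fun j hj hmem => ?_, fun j hj hmem => ?_⟩
    · have := hmin j
      have := hmem.1
      linarith
    · have := hb j hj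
      have := hmem.2
      linarith
end
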